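/- arXiv:2103.12330 — 2 statements merged into one kernel-verified Lean document; each statement's English description precedes it below -/
import Mathlib

section
/- Let $q$ be a prime, $l \ge 1$, $c'$ an integer with $\gcd(c', q) = 1$, and $n, m$ integers with $\gcd(m, q) = 1$. Then the Kloosterman sum $S(nq, m, c'q^{l+1}) = 0$. -/
open Finset

noncomputable def e (t : ℝ) : ℂ := Complex.exp (2 * Real.pi * Complex.I * t)

/-- Kloosterman sum `S(a,b,c)`, written as a sum over pairs `(x,y)` with `x y ≡ 1 (mod c)`. -/
noncomputable def kloos (a b : ℤ) (c : ℕ) : ℂ :=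
  ∑ x ∈ Finset.range c, ∑ y ∈ Finset.range c,
    if (x * y) % c = 1 % c then e (((a * x + b * y : ℤ) : ℝ) / c) else 0

lemma e_int (c : ℕ) [NeZero c] (k : ℤ) :
    e ((k : ℝ) / c) = ZMod.stdAddChar ((k : ZMod c)) := by
  rw [ZMod.stdAddChar_coe, e]
  push_cast
  ring_nf

lemma kloos_eq (a b : ℤ) (c : ℕ) [NeZero c] (hc : 1 < c) :
    kloos a b c = ∑ u : (ZMod c)ˣ,
      ZMod.stdAddChar ((a : ZMod c) * (u : ZMod c) + (b : ZMod c) * ((u⁻¹ : (ZMod c)ˣ) : ZMod c)) := by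
  rw [kloos, ← Finset.sum_product', ← Finset.sum_filter]
  refine Finset.sum_bij (fun p hp => ?_) ?_ ?_ ?_ ?_
  · -- construct the unit
    refine ⟨(p.1 : ZMod c), (p.2 : ZMod c), ?_, ?_⟩
    · have hcond : (p.1 * p.2) % c = 1 % c := (Finset.mem_filter.mp hp).2
      have := (ZMod.natCast_eq_natCast_iff _ _ _).mpr hcond
      push_cast at this
      exact this
    · have hcond : (p.1 * p.2) % c = 1 % c := (Finset.mem_filter.mp hp).2
      have := (ZMod.natCast_eq_natCast_iff _ _ _).mpr hcond
      push_cast at this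
      rw [mul_comm] at this
      exact this
  · intro a ha; exact Finset.mem_univ _
  · intro p hp p' hp' h
    have hm1 := Finset.mem_product.mp (Finset.mem_filter.mp hp).1
    have hm2 := Finset.mem_product.mp (Finset.mem_filter.mp hp').1
    have h1 : (p.1 : ZMod c) = (p'.1 : ZMod c) := congrArg Units.val h
    have h2 : (p.2 : ZMod c) = (p'.2 : ZMod c) := congrArg Units.inv h
    have e1 : p.1 = p'.1 := by
      have := congrArg ZMod.val h1
      rwa [ZMod.val_cast_of_lt (Finset.mem_range.mp hm1.1),
        ZMod.val_cast_of_lt (Finset.mem_range.mp hm2.1)] at this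
    have e2 : p.2 = p'.2 := by
      have := congrArg ZMod.val h2
      rwa [ZMod.val_cast_of_lt (Finset.mem_range.mp hm1.2),
        ZMod.val_cast_of_lt (Finset.mem_range.mp hm2.2)] at this
    exact Prod.ext e1 e2
  · intro u _
    refine ⟨((u : ZMod c).val, ((u⁻¹ : (ZMod c)ˣ) : ZMod c).val), ?_, ?_⟩
    · refine Finset.mem_filter.mpr ⟨Finset.mem_product.mpr ⟨?_, ?_⟩, ?_⟩
      · exact Finset.mem_range.mpr (ZMod.val_lt _)
      · exact Finset.mem_range.mpr (ZMod.val_lt _)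
      · rw [← ZMod.val_mul, Units.mul_inv, ZMod.val_one_eq_one_mod]
    · ext
      simp [ZMod.natCast_zmod_val]
  · intro p hp
    have hcast : ∀ k : ℤ, e ((k : ℝ) / c) = ZMod.stdAddChar ((k : ZMod c)) := e_int c
    rw [hcast]
    push_cast
    rfl

theorem stmt0 (q : ℕ) (hq : q.Prime) (l : ℕ) (hl : 1 ≤ l) (c' : ℕ)
    (hc' : Nat.Coprime c' q) (n m : ℤ) (hm : Int.gcd m q = 1) :
    kloos (n * q) m (c' * q ^ (l + 1)) = 0 := by
  obtain ⟨l, rfl⟩ : ∃ l', l = l' + 1 := ⟨l - 1, by omega⟩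
  set c : ℕ := c' * q ^ (l + 1 + 1) with hc_def
  have hq2 : 2 ≤ q := hq.two_le
  have hc'0 : 0 < c' := by
    rcases Nat.eq_zero_or_pos c' with h | h
    · subst h; simp [Nat.Coprime] at hc'; omega
    · exact h
  have hc1 : 1 < c := by
    have : 2 ^ (l + 1 + 1) ≤ q ^ (l + 1 + 1) := Nat.pow_le_pow_left hq2 _
    have h4 : 4 ≤ q ^ (l + 1 + 1) := le_trans (by
      have : (4:ℕ) = 2^2 := rfl
      calc (4:ℕ) = 2 ^ 2 := rfl
        _ ≤ 2 ^ (l + 1 + 1) := Nat.pow_le_pow_right (by norm_num) (by omega)) this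
    calc 1 < 1 * 4 := by norm_num
      _ ≤ c' * q ^ (l + 1 + 1) := Nat.mul_le_mul hc'0 h4
  haveI : NeZero c := ⟨by omega⟩
  rw [kloos_eq _ _ c hc1]
  set ψ : AddChar (ZMod c) ℂ := ZMod.stdAddChar with hψ
  set A : ZMod c := ((n * q : ℤ) : ZMod c) with hA
  set B : ZMod c := ((m : ℤ) : ZMod c) with hB
  set F : (ZMod c)ˣ → ℂ := fun u => ψ (A * ↑u + B * ↑(u⁻¹ : (ZMod c)ˣ)) with hF
  show ∑ u : (ZMod c)ˣ, F u = 0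
  -- the shift element
  set z1 : ZMod c := ((c' * q ^ (l + 1) : ℕ) : ZMod c) with hz1
  have hz1sq : z1 * z1 = 0 := by
    rw [hz1, ← Nat.cast_mul, ZMod.natCast_eq_zero_iff]
    exact ⟨c' * q ^ l, by ring⟩
  have hAz : A * z1 = 0 := by
    have h1 : A * z1 = (((n * q) * (c' * q ^ (l + 1) : ℕ) : ℤ) : ZMod c) := by
      rw [hA, hz1]; push_cast; ring
    rw [h1, ZMod.intCast_zmod_eq_zero_iff_dvd]
    refine ⟨n, ?_⟩
    simp only [hc_def]
    push_cast [pow_succ]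
    ring
  -- z t = t * z1
  have hz2t : ∀ t : ℕ, ((t : ZMod c) * z1) * ((t : ZMod c) * z1) = 0 := by
    intro t
    have : ((t : ZMod c) * z1) * ((t : ZMod c) * z1) = (t : ZMod c) * (t : ZMod c) * (z1 * z1) := by
      ring
    rw [this, hz1sq, mul_zero]
  -- the unit w t
  have wdef : ∀ t : ℕ, ∃ w : (ZMod c)ˣ, (w : ZMod c) = 1 - (t : ZMod c) * z1 ∧
      ((w⁻¹ : (ZMod c)ˣ) : ZMod c) = 1 + (t : ZMod c) * z1 := by
    intro t
    set zt := (t : ZMod c) * z1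
    have h1 : (1 - zt) * (1 + zt) = 1 := by
      have : (1 - zt) * (1 + zt) = 1 - zt * zt := by ring
      rw [this, hz2t t, sub_zero]
    refine ⟨⟨1 - zt, 1 + zt, h1, by rw [mul_comm]; exact h1⟩, rfl, rfl⟩
  -- key reindexing identity
  have key : ∀ t : ℕ, ∑ u : (ZMod c)ˣ, F u
      = ∑ u : (ZMod c)ˣ, F u * (ψ (B * ↑(u⁻¹ : (ZMod c)ˣ) * z1)) ^ t := by
    intro t
    obtain ⟨w, hw, hwinv⟩ := wdef t
    have := Equiv.sum_comp (Equiv.mulRight w) F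
    rw [← this]
    refine Finset.sum_congr rfl ?_
    intro u _
    have hcoe : ((Equiv.mulRight w) u : ZMod c) = (u : ZMod c) * (1 - (t : ZMod c) * z1) := by
      simp [Equiv.mulRight, hw]
    have hcoeinv : (((Equiv.mulRight w u)⁻¹ : (ZMod c)ˣ) : ZMod c)
        = ((u⁻¹ : (ZMod c)ˣ) : ZMod c) * (1 + (t : ZMod c) * z1) := by
      have : (Equiv.mulRight w u)⁻¹ = u⁻¹ * w⁻¹ := by
        simp [Equiv.mulRight, mul_inv_rev, mul_comm]
      rw [this, Units.val_mul, hwinv]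
    rw [hF]
    simp only [hcoe, hcoeinv]
    have harg : A * ((u : ZMod c) * (1 - (t : ZMod c) * z1))
        + B * (((u⁻¹ : (ZMod c)ˣ) : ZMod c) * (1 + (t : ZMod c) * z1))
        = (A * ↑u + B * ↑(u⁻¹ : (ZMod c)ˣ)) + t • (B * ↑(u⁻¹ : (ZMod c)ˣ) * z1) := by
      rw [nsmul_eq_mul]
      push_cast
      have expand : A * ((u : ZMod c) * (1 - (t : ZMod c) * z1))
          + B * (((u⁻¹ : (ZMod c)ˣ) : ZMod c) * (1 + (t : ZMod c) * z1))
          = (A * ↑u + B * ↑(u⁻¹ : (ZMod c)ˣ)) + (t : ZMod c) * (B * ↑(u⁻¹ : (ZMod c)ˣ) * z1)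
            - (t : ZMod c) * ((u : ZMod c) * (A * z1)) := by ring
      rw [expand, hAz]
      ring
    rw [harg, AddChar.map_add_eq_mul, AddChar.map_nsmul_eq_pow]
  -- geometric sum vanishes
  have hgeom : ∀ u : (ZMod c)ˣ,
      ∑ t ∈ Finset.range q, (ψ (B * ↑(u⁻¹ : (ZMod c)ˣ) * z1)) ^ t = 0 := by
    intro u
    set ζ : ℂ := ψ (B * ↑(u⁻¹ : (ZMod c)ˣ) * z1) with hζ
    have hζq : ζ ^ q = 1 := by
      rw [hζ, ← AddChar.map_nsmul_eq_pow, nsmul_eq_mul]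
      have : (q : ZMod c) * (B * ↑(u⁻¹ : (ZMod c)ˣ) * z1)
          = B * ↑(u⁻¹ : (ZMod c)ˣ) * ((q : ZMod c) * z1) := by ring
      rw [this]
      have hqz : (q : ZMod c) * z1 = 0 := by
        rw [hz1, ← Nat.cast_mul, ZMod.natCast_eq_zero_iff]
        exact ⟨1, by ring⟩
      rw [hqz, mul_zero, AddChar.map_zero_eq_one]
    have hζne : ζ ≠ 1 := by
      intro h
      have h0 : B * ↑(u⁻¹ : (ZMod c)ˣ) * z1 = 0 := by
        have := ZMod.injective_stdAddChar (N := c)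
        have h1 : ψ (B * ↑(u⁻¹ : (ZMod c)ˣ) * z1) = ψ 0 := by
          rw [AddChar.map_zero_eq_one]; exact h
        exact this h1
      have h0' : B * z1 = 0 := by
        have := congrArg (fun x => x * (u : ZMod c)) h0
        simp only [zero_mul] at this
        have h2 : B * z1 * (↑(u⁻¹ : (ZMod c)ˣ) * ↑u) = 0 := by
          rw [← this]; ring
        rwa [Units.inv_mul, mul_one] at h2
      have h0'' : ((m * (c' * q ^ (l + 1) : ℕ) : ℤ) : ZMod c) = 0 := by
        rw [hB, hz1] at h0'
        push_cast
        push_cast at h0'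
        exact h0'
      rw [ZMod.intCast_zmod_eq_zero_iff_dvd] at h0''
      replace h0' := h0''
      have hdvd : (q : ℤ) ∣ m := by
        have hcq : (c : ℤ) = (c' * q ^ (l + 1) : ℕ) * q := by push_cast [hc_def]; ring
        rw [hcq] at h0'
        have hne : ((c' * q ^ (l + 1) : ℕ) : ℤ) ≠ 0 := by
          have : 0 < c' * q ^ (l + 1) := Nat.mul_pos hc'0 (Nat.pow_pos (by omega))
          exact_mod_cast this.ne'
        rcases h0' with ⟨k, hk⟩
        refine ⟨k, ?_⟩
        have : ((c' * q ^ (l + 1) : ℕ) : ℤ) * m = ((c' * q ^ (l + 1) : ℕ) : ℤ) * (q * k) := by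
          rw [mul_comm (m : ℤ)] at hk
          linarith [hk]
        exact mul_left_cancel₀ hne (by linarith [this])
      have : (q : ℤ) ∣ Int.gcd m q := Int.dvd_coe_gcd hdvd dvd_rfl
      rw [hm] at this
      have : (q : ℤ) ∣ 1 := by exact_mod_cast this
      have := Int.le_of_dvd one_pos this
      omega
    have := geom_sum_eq hζne q
    rw [this, hζq, sub_self, zero_div]
  -- combine
  have hq0 : (q : ℂ) ≠ 0 := by
    exact_mod_cast (by omega : q ≠ 0)
  have hsum : (q : ℂ) * ∑ u : (ZMod c)ˣ, F u = 0 := by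
    calc (q : ℂ) * ∑ u : (ZMod c)ˣ, F u
        = ∑ t ∈ Finset.range q, ∑ u : (ZMod c)ˣ, F u := by
          rw [Finset.sum_const, Finset.card_range, nsmul_eq_mul]
      _ = ∑ t ∈ Finset.range q, ∑ u : (ZMod c)ˣ, F u * (ψ (B * ↑(u⁻¹ : (ZMod c)ˣ) * z1)) ^ t := by
          exact Finset.sum_congr rfl fun t _ => key t
      _ = ∑ u : (ZMod c)ˣ, F u * ∑ t ∈ Finset.range q, (ψ (B * ↑(u⁻¹ : (ZMod c)ˣ) * z1)) ^ t := by
          rw [Finset.sum_comm]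
          exact Finset.sum_congr rfl fun u _ => by rw [Finset.mul_sum]
      _ = 0 := by
          refine Finset.sum_eq_zero fun u _ => ?_
          rw [hgeom u, mul_zero]
  exact (mul_eq_zero.mp hsum).resolve_left hq0
end

section
/- For $x > 0$, the modified Bessel function satisfies the integral representation $K_0(x) = e^{-x} 2^{-1/2} \int_0^\infty e^{-ux} u^{-1/2} (1 + u/2)^{-1/2} du$. -/
open Real

/-- Integral representation `K₀(x) = e^{-x} 2^{-1/2} ∫_0^∞ e^{-ux} u^{-1/2} (1+u/2)^{-1/2} du`,
where `K₀(x) = ∫_0^∞ e^{-x cosh t} dt`. -/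
theorem stmt8 (x : ℝ) (hx : 0 < x) :
    (∫ t in Set.Ioi (0 : ℝ), Real.exp (-x * Real.cosh t))
      = Real.exp (-x) * (2 : ℝ) ^ (-(1 / 2 : ℝ)) *
        ∫ u in Set.Ioi (0 : ℝ),
          Real.exp (-u * x) * u ^ (-(1 / 2 : ℝ)) * (1 + u / 2) ^ (-(1 / 2 : ℝ)) := by
  have himg : (fun t : ℝ => Real.cosh t - 1) '' Set.Ioi 0 = Set.Ioi (0 : ℝ) := by
    ext u
    constructor
    · rintro ⟨t, ht, rfl⟩
      simp only [Set.mem_Ioi] at *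
      have := Real.one_lt_cosh.mpr (ne_of_gt ht)
      linarith
    · intro hu
      simp only [Set.mem_Ioi] at hu
      set y : ℝ := 1 + u with hy_def
      have hy : (1 : ℝ) < y := by simp only [hy_def]; linarith
      have hsq : (0 : ℝ) ≤ y ^ 2 - 1 := by nlinarith
      set z : ℝ := y + Real.sqrt (y ^ 2 - 1) with hz_def
      have hz1 : (1 : ℝ) < z :=
        lt_of_lt_of_le hy (le_add_of_nonneg_right (Real.sqrt_nonneg _))
      have hz0 : (0 : ℝ) < z := by linarith
      refine ⟨Real.log z, Real.log_pos hz1, ?_⟩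
      have hs2 : Real.sqrt (y ^ 2 - 1) ^ 2 = y ^ 2 - 1 := Real.sq_sqrt hsq
      have hzz : z ^ 2 + 1 = 2 * y * z := by
        simp only [hz_def]; nlinarith [hs2]
      simp only
      rw [Real.cosh_eq, Real.exp_log hz0, Real.exp_neg, Real.exp_log hz0]
      have hzne : z ≠ 0 := ne_of_gt hz0
      field_simp
      nlinarith [hzz]
  have hderiv : ∀ t ∈ Set.Ioi (0 : ℝ),
      HasDerivWithinAt (fun t => Real.cosh t - 1) (Real.sinh t) (Set.Ioi 0) t :=
    fun t _ => ((Real.hasDerivAt_cosh t).sub_const 1).hasDerivWithinAt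
  have hinj : Set.InjOn (fun t : ℝ => Real.cosh t - 1) (Set.Ioi 0) := by
    intro a ha b hb h
    simp only [Set.mem_Ioi] at ha hb
    simp only at h
    have : Real.cosh a = Real.cosh b := by linarith
    exact Real.cosh_strictMonoOn.injOn (le_of_lt ha) (le_of_lt hb) this
  have key : (∫ u in Set.Ioi (0 : ℝ),
        Real.exp (-u * x) * u ^ (-(1 / 2 : ℝ)) * (1 + u / 2) ^ (-(1 / 2 : ℝ)))
      = ∫ t in Set.Ioi (0 : ℝ), |Real.sinh t| •
          (Real.exp (-(Real.cosh t - 1) * x) * (Real.cosh t - 1) ^ (-(1 / 2 : ℝ)) *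
            (1 + (Real.cosh t - 1) / 2) ^ (-(1 / 2 : ℝ))) := by
    conv_lhs => rw [← himg]
    exact MeasureTheory.integral_image_eq_integral_abs_deriv_smul measurableSet_Ioi hderiv hinj
      (fun u => Real.exp (-u * x) * u ^ (-(1 / 2 : ℝ)) * (1 + u / 2) ^ (-(1 / 2 : ℝ)))
  have hpt : ∀ t ∈ Set.Ioi (0 : ℝ),
      |Real.sinh t| •
          (Real.exp (-(Real.cosh t - 1) * x) * (Real.cosh t - 1) ^ (-(1 / 2 : ℝ)) *
            (1 + (Real.cosh t - 1) / 2) ^ (-(1 / 2 : ℝ)))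
        = ((2 : ℝ) ^ ((1 / 2 : ℝ)) * Real.exp x) * Real.exp (-x * Real.cosh t) := by
    intro t ht
    simp only [Set.mem_Ioi] at ht
    have hs : 0 < Real.sinh t := Real.sinh_pos_iff.mpr ht
    have hc : 1 < Real.cosh t := Real.one_lt_cosh.mpr (ne_of_gt ht)
    have h1 : (0:ℝ) ≤ Real.cosh t - 1 := by linarith
    have h2 : (0:ℝ) ≤ 1 + (Real.cosh t - 1) / 2 := by linarith
    have hprod : (Real.cosh t - 1) * (1 + (Real.cosh t - 1) / 2) = Real.sinh t ^ 2 / 2 := by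
      have := Real.cosh_sq_sub_sinh_sq t
      nlinarith [this]
    have hmul : (Real.cosh t - 1) ^ (-(1 / 2 : ℝ)) * (1 + (Real.cosh t - 1) / 2) ^ (-(1 / 2 : ℝ))
        = (Real.sinh t ^ 2 / 2) ^ (-(1 / 2 : ℝ)) := by
      rw [← Real.mul_rpow h1 h2, hprod]
    have hpow : (Real.sinh t ^ 2 / 2) ^ (-(1 / 2 : ℝ))
        = (Real.sinh t)⁻¹ * (2 : ℝ) ^ ((1 / 2 : ℝ)) := by
      rw [div_eq_mul_inv, Real.mul_rpow (by positivity) (by positivity),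
        ← Real.rpow_natCast (Real.sinh t) 2, ← Real.rpow_mul hs.le,
        Real.inv_rpow (by norm_num)]
      rw [show ((2:ℕ):ℝ) * -(1 / 2 : ℝ) = -1 by norm_num, Real.rpow_neg_one,
        ← Real.rpow_neg (by norm_num : (0:ℝ) ≤ 2)]
      norm_num
    have hexp : Real.exp (-(Real.cosh t - 1) * x) = Real.exp x * Real.exp (-x * Real.cosh t) := by
      rw [← Real.exp_add]; ring_nf
    rw [smul_eq_mul, abs_of_pos hs, mul_assoc, hmul, hpow, hexp]
    field_simp
  rw [key, MeasureTheory.setIntegral_congr_fun measurableSet_Ioi hpt,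
    MeasureTheory.integral_const_mul]
  have h2 : Real.exp (-x) * (2 : ℝ) ^ (-(1 / 2 : ℝ)) *
      ((2 : ℝ) ^ ((1 / 2 : ℝ)) * Real.exp x) = 1 := by
    have : (2 : ℝ) ^ (-(1 / 2 : ℝ)) * (2 : ℝ) ^ ((1 / 2 : ℝ)) = 1 := by
      rw [← Real.rpow_add (by norm_num : (0:ℝ) < 2)]; norm_num
    have he : Real.exp (-x) * Real.exp x = 1 := by
      rw [← Real.exp_add]; simp
    calc Real.exp (-x) * (2 : ℝ) ^ (-(1 / 2 : ℝ)) * ((2 : ℝ) ^ ((1 / 2 : ℝ)) * Real.exp x)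
        = ((2 : ℝ) ^ (-(1 / 2 : ℝ)) * (2 : ℝ) ^ ((1 / 2 : ℝ))) * (Real.exp (-x) * Real.exp x) := by ring
      _ = 1 := by rw [this, he, mul_one]
  rw [← mul_assoc, h2, one_mul]
end
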